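/- Let A be a bistochastic matrix, C = (i_1,...,i_k) a set of agents such that all probability mass of each object x_{i_j} is distributed among agents in C, and suppose each agent i_j in C strictly top-ranks x_{i_{j+1}} (indices mod k) among the objects {x_{i_1},...,x_{i_k}}. If A is not SD-Pareto-dominated at the profile, then A_{i_j, x_{i_{j+1}}} = 1 for every j. -/

import Mathlib

open Finset

/-- A strict preference over the `n` objects, given by its rank function:
`P x ≤ P y` means `x` is weakly preferred to `y` (rank `0` is best). -/
abbrev Pref (n : ℕ) := Equiv.Perm (Fin n)

/-- The top-ranked object of a preference. -/
def topOf {n : ℕ} [NeZero n] (P : Pref n) : Fin n := P.symm 0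

/-- Upper contour set of object `x` at preference `P`. -/
def UC {n : ℕ} (P : Pref n) (x : Fin n) : Finset (Fin n) :=
  Finset.univ.filter fun y => P y ≤ P x

/-- First-order stochastic dominance of lottery `l` over lottery `m` w.r.t. `P`. -/
def SDdom {n : ℕ} (P : Pref n) (l m : Fin n → ℝ) : Prop :=
  ∀ x, ∑ y ∈ UC P x, m y ≤ ∑ y ∈ UC P x, l y

/-- Strict stochastic dominance. -/
def SDstrict {n : ℕ} (P : Pref n) (l m : Fin n → ℝ) : Prop :=
  SDdom P l m ∧ ∃ x, ∑ y ∈ UC P x, m y < ∑ y ∈ UC P x, l y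

/-- Point mass at `x`. -/
def delta {n : ℕ} (x : Fin n) : Fin n → ℝ := fun y => if y = x then 1 else 0

/-- A bistochastic (doubly stochastic) matrix: a probabilistic assignment.
Row `i` is agent `i`'s lottery over objects. -/
def Bistochastic {n : ℕ} (A : Matrix (Fin n) (Fin n) ℝ) : Prop :=
  (∀ i j, 0 ≤ A i j) ∧ (∀ i, ∑ j, A i j = 1) ∧ (∀ j, ∑ i, A i j = 1)

/-- `B` SD-Pareto-dominates `A` at profile `P`. -/
def ParetoDom {n : ℕ} (P : Fin n → Pref n) (B A : Matrix (Fin n) (Fin n) ℝ) : Prop :=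
  (∀ i, SDdom (P i) (B i) (A i)) ∧ ∃ i, SDstrict (P i) (B i) (A i)

/-- `A` is SD-Pareto-efficient at `P`: no bistochastic matrix dominates it. -/
def SDEffAt {n : ℕ} (P : Fin n → Pref n) (A : Matrix (Fin n) (Fin n) ℝ) : Prop :=
  ¬ ∃ B, Bistochastic B ∧ ParetoDom P B A

/-- `A` is SD-individually rational at `P`: agent `i` (endowed with object `i`)
gets a lottery stochastically dominating the point mass at her endowment. -/
def SDIRAt {n : ℕ} (P : Fin n → Pref n) (A : Matrix (Fin n) (Fin n) ℝ) : Prop :=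
  ∀ i, SDdom (P i) (A i) (delta i)

theorem stmt3 {n k : ℕ} [NeZero k] (P : Fin n → Pref n) (A : Matrix (Fin n) (Fin n) ℝ)
    (hA : Bistochastic A) (i : ZMod k → Fin n) (hinj : Function.Injective i)
    (hcol : ∀ j : ZMod k, ∑ a ∈ Finset.univ.image i, A a (i j) = 1)
    (htop : ∀ j j' : ZMod k, i j' ≠ i (j+1) → P (i j) (i (j+1)) < P (i j) (i j'))
    (hEff : SDEffAt P A) :
    ∀ j : ZMod k, A (i j) (i (j+1)) = 1 := by
  classical
  set S : Finset (Fin n) := Finset.univ.image i with hS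
  have hmemS : ∀ j : ZMod k, i j ∈ S := fun j => Finset.mem_image_of_mem i (Finset.mem_univ j)
  have hinv : ∀ j : ZMod k, Function.invFun i (i j) = j :=
    fun j => Function.leftInverse_invFun hinj j
  -- columns indexed by S have no mass outside rows S
  have hcolzero : ∀ (j : ZMod k) (a : Fin n), a ∉ S → A a (i j) = 0 := by
    intro j a ha
    have h1 : ∑ b ∈ Finset.univ \ S, A b (i j) = 0 := by
      rw [Finset.sum_sdiff_eq_sub (Finset.subset_univ S), hA.2.2 (i j), hcol j]; ring
    exact (Finset.sum_eq_zero_iff_of_nonneg (fun b _ => hA.1 b (i j))).mp h1 a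
      (Finset.mem_sdiff.mpr ⟨Finset.mem_univ a, ha⟩)
  have hcolS : ∀ x ∈ S, ∑ a ∈ S, A a x = 1 := by
    intro x hx
    obtain ⟨j, _, rfl⟩ := Finset.mem_image.mp hx
    exact hcol j
  -- rows indexed by S have no mass outside columns S
  have hdouble : ∑ a ∈ S, ∑ x ∈ Finset.univ \ S, A a x = 0 := by
    have h1 : ∑ a ∈ S, ∑ x ∈ Finset.univ \ S, A a x
        = ∑ a ∈ S, (1 - ∑ x ∈ S, A a x) := by
      refine Finset.sum_congr rfl fun a _ => ?_
      rw [Finset.sum_sdiff_eq_sub (Finset.subset_univ S), hA.2.1 a]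
    have h2 : ∑ a ∈ S, ∑ x ∈ S, A a x = ∑ x ∈ S, (1:ℝ) := by
      refine Finset.sum_comm.trans ?_
      exact Finset.sum_congr rfl fun x hx => hcolS x hx
    rw [h1, Finset.sum_sub_distrib, h2]
    simp
  have hrowzero : ∀ (j : ZMod k) (x : Fin n), x ∉ S → A (i j) x = 0 := by
    intro j x hx
    have h0 : ∀ a ∈ S, ∑ x ∈ Finset.univ \ S, A a x = 0 :=
      (Finset.sum_eq_zero_iff_of_nonneg
        (fun a _ => Finset.sum_nonneg fun y _ => hA.1 a y)).mp hdouble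
    exact (Finset.sum_eq_zero_iff_of_nonneg (fun y _ => hA.1 (i j) y)).mp
      (h0 (i j) (hmemS j)) x (Finset.mem_sdiff.mpr ⟨Finset.mem_univ x, hx⟩)
  intro j
  have hle : A (i j) (i (j+1)) ≤ 1 := by
    calc A (i j) (i (j+1)) ≤ ∑ x, A (i j) x :=
          Finset.single_le_sum (fun x _ => hA.1 (i j) x) (Finset.mem_univ _)
      _ = 1 := hA.2.1 (i j)
  by_contra hne
  have hlt : A (i j) (i (j+1)) < 1 := lt_of_le_of_ne hle hne
  apply hEff
  set B : Matrix (Fin n) (Fin n) ℝ :=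
    fun a x => if a ∈ S then (if x = i (Function.invFun i a + 1) then (1:ℝ) else 0)
      else A a x with hBdef
  have hBrow : ∀ (j' : ZMod k) (x : Fin n),
      B (i j') x = if x = i (j'+1) then (1:ℝ) else 0 := by
    intro j' x
    simp only [hBdef, hmemS j', if_true, hinv j']
  have hBout : ∀ a ∉ S, ∀ x, B a x = A a x := by
    intro a ha x
    simp only [hBdef, ha, if_false]
  -- B is bistochastic
  have hBnn : ∀ a x, 0 ≤ B a x := by
    intro a x
    simp only [hBdef]
    split_ifs
    · norm_num
    · norm_num
    · exact hA.1 a x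
  have hBrowsum : ∀ a, ∑ x, B a x = 1 := by
    intro a
    by_cases ha : a ∈ S
    · obtain ⟨j', _, rfl⟩ := Finset.mem_image.mp ha
      simp only [hBrow]
      rw [Finset.sum_ite_eq' Finset.univ (i (j'+1)) (fun _ => (1:ℝ))]
      simp
    · rw [show ∑ x, B a x = ∑ x, A a x from
        Finset.sum_congr rfl fun x _ => hBout a ha x]
      exact hA.2.1 a
  have hBcolsum : ∀ x, ∑ a, B a x = 1 := by
    intro x
    have hsplit : ∑ a ∈ Finset.univ \ S, B a x + ∑ a ∈ S, B a x = ∑ a, B a x :=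
      Finset.sum_sdiff (Finset.subset_univ S)
    rw [← hsplit]
    have hout : ∑ a ∈ Finset.univ \ S, B a x = ∑ a ∈ Finset.univ \ S, A a x :=
      Finset.sum_congr rfl fun a ha => hBout a (Finset.mem_sdiff.mp ha).2 x
    have hin : ∑ a ∈ S, B a x = ∑ j' : ZMod k, if x = i (j'+1) then (1:ℝ) else 0 := by
      rw [hS, Finset.sum_image (fun a _ b _ h => hinj h)]
      exact Finset.sum_congr rfl fun j' _ => hBrow j' x
    rw [hout, hin]
    by_cases hx : x ∈ S
    · obtain ⟨j0, _, rfl⟩ := Finset.mem_image.mp hx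
      have hz : ∑ a ∈ Finset.univ \ S, A a (i j0) = 0 :=
        Finset.sum_eq_zero fun a ha => hcolzero j0 a (Finset.mem_sdiff.mp ha).2
      have hone : ∑ j' : ZMod k, (if i j0 = i (j'+1) then (1:ℝ) else 0) = 1 := by
        have he : ∀ j' : ZMod k,
            (if i j0 = i (j'+1) then (1:ℝ) else 0) = (if j' = j0 - 1 then (1:ℝ) else 0) := by
          intro j'
          congr 1
          simp only [eq_iff_iff]
          constructor
          · intro h
            have h2 := hinj h
            rw [h2]; ring
          · intro h
            subst h
            congr 1
            ring
        rw [Finset.sum_congr rfl fun j' _ => he j']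
        rw [Finset.sum_ite_eq' Finset.univ (j0 - 1) (fun _ => (1:ℝ))]
        simp
      rw [hz, hone]; ring
    · have hz1 : ∑ j' : ZMod k, (if x = i (j'+1) then (1:ℝ) else 0) = 0 :=
        Finset.sum_eq_zero fun j' _ => by
          rw [if_neg]; intro h; exact hx (h ▸ hmemS (j'+1))
      have hz2 : ∑ a ∈ Finset.univ \ S, A a x = 1 := by
        rw [Finset.sum_sdiff_eq_sub (Finset.subset_univ S), hA.2.2 x]
        have : ∑ a ∈ S, A a x = 0 := by
          rw [hS, Finset.sum_image (fun a _ b _ h => hinj h)]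
          exact Finset.sum_eq_zero fun j' _ => hrowzero j' x hx
        rw [this]; ring
      rw [hz1, hz2]; ring
  -- SD-dominance of every row
  have hUCmem : ∀ (Q : Pref n) (x y : Fin n), y ∈ UC Q x ↔ Q y ≤ Q x := by
    intro Q x y
    simp [UC]
  have hdom : ∀ a, SDdom (P a) (B a) (A a) := by
    intro a
    by_cases ha : a ∈ S
    · obtain ⟨j', _, rfl⟩ := Finset.mem_image.mp ha
      intro x
      have hrhs : ∑ y ∈ UC (P (i j')) x, B (i j') y
          = if i (j'+1) ∈ UC (P (i j')) x then (1:ℝ) else 0 := by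
        rw [Finset.sum_congr rfl fun y _ => hBrow j' y]
        exact Finset.sum_ite_eq' _ (i (j'+1)) (fun _ => (1:ℝ))
      rw [hrhs]
      by_cases hmem : i (j'+1) ∈ UC (P (i j')) x
      · rw [if_pos hmem]
        calc ∑ y ∈ UC (P (i j')) x, A (i j') y ≤ ∑ y, A (i j') y :=
              Finset.sum_le_sum_of_subset_of_nonneg (Finset.subset_univ _)
                (fun y _ _ => hA.1 (i j') y)
          _ = 1 := hA.2.1 (i j')
      · rw [if_neg hmem]
        apply le_of_eq
        apply Finset.sum_eq_zero
        intro y hy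
        by_cases hyS : y ∈ S
        · exfalso
          obtain ⟨j'', _, rfl⟩ := Finset.mem_image.mp hyS
          have hyUC := (hUCmem _ _ _).mp hy
          have hnUC : ¬ P (i j') (i (j'+1)) ≤ P (i j') x := fun h => hmem ((hUCmem _ _ _).mpr h)
          by_cases heq : i j'' = i (j'+1)
          · rw [heq] at hyUC; exact hnUC hyUC
          · have := htop j' j'' heq
            exact hnUC (le_of_lt (lt_of_lt_of_le this hyUC))
        · exact hrowzero j' y hyS
    · intro x
      exact le_of_eq (Finset.sum_congr rfl fun y _ => (hBout a ha y).symm)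
  refine ⟨B, ⟨hBnn, hBrowsum, hBcolsum⟩, hdom, ⟨i j, hdom (i j), ⟨i (j+1), ?_⟩⟩⟩
  have hrhs : ∑ y ∈ UC (P (i j)) (i (j+1)), B (i j) y = 1 := by
    rw [Finset.sum_congr rfl fun y _ => hBrow j y,
      Finset.sum_ite_eq' _ (i (j+1)) (fun _ => (1:ℝ))]
    rw [if_pos ((hUCmem _ _ _).mpr (le_refl _))]
  have hlhs : ∑ y ∈ UC (P (i j)) (i (j+1)), A (i j) y = A (i j) (i (j+1)) := by
    apply Finset.sum_eq_single
    · intro y hy hne'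
      by_cases hyS : y ∈ S
      · exfalso
        obtain ⟨j'', _, rfl⟩ := Finset.mem_image.mp hyS
        have h1 := htop j j'' (by exact hne')
        have h2 := (hUCmem _ _ _).mp hy
        exact absurd h2 (not_le_of_gt h1)
      · exact hrowzero j y hyS
    · intro h
      exact absurd ((hUCmem _ _ _).mpr (le_refl _)) h
  rw [hrhs, hlhs]
  exact hlt
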